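/- arXiv:0807.2205 — 2 statements merged into one kernel-verified Lean document; each statement's English description precedes it below -/
import Mathlib

section
/- Suppose 𝒜 ⊆ E^∞ is strategically Ramsey and for some sequence Δ > 0 the set Int_Δ(𝒜) is large. Then there is a block subspace X such that II has a strategy in Gowers' game G_X to play in 𝒜. -/
set_option synthInstance.maxHeartbeats 1000000
set_option maxHeartbeats 1000000
set_option linter.unusedSectionVars false
set_option linter.deprecated false


section Defs

variable {𝔽 : Type} [Field 𝔽] {E : Type} [AddCommGroup E] [Module 𝔽 E]

/-- The support of a vector with respect to the basis `b`. -/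
noncomputable def supp (b : Module.Basis ℕ 𝔽 E) (x : E) : Finset ℕ :=
  (b.repr x).support

/-- `VecLt b x y` means `x < y`: every element of the support of `x` is smaller than
every element of the support of `y`. -/
def VecLt (b : Module.Basis ℕ 𝔽 E) (x y : E) : Prop :=
  ∀ m ∈ supp b x, ∀ n ∈ supp b y, m < n

/-- `NatLt b k x` means `k < x`: `k` is smaller than every element of the support of `x`. -/
def NatLt (b : Module.Basis ℕ 𝔽 E) (k : ℕ) (x : E) : Prop :=
  ∀ n ∈ supp b x, k < n

/-- An infinite block sequence: a sequence of nonzero vectors with `x n < x (n + 1)`. -/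
def IsBlockSeq (b : Module.Basis ℕ 𝔽 E) (x : ℕ → E) : Prop :=
  (∀ n, x n ≠ 0) ∧ ∀ n, VecLt b (x n) (x (n + 1))

/-- A finite block sequence: a list of nonzero vectors, consecutively increasing in the
block ordering. -/
def IsFinBlockSeq (b : Module.Basis ℕ 𝔽 E) (l : List E) : Prop :=
  (∀ x ∈ l, x ≠ 0) ∧ l.Chain' (VecLt b)

/-- A block subspace: a subspace spanned by an infinite block sequence. -/
def IsBlockSubspace (b : Module.Basis ℕ 𝔽 E) (X : Submodule 𝔽 E) : Prop :=
  ∃ y : ℕ → E, IsBlockSeq b y ∧ X = Submodule.span 𝔽 (Set.range y)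

/-- The list of the first `n` values of a sequence. -/
def hist {α : Type _} (x : ℕ → α) (n : ℕ) : List α :=
  List.ofFn (fun j : Fin n => x j)

/-- The concatenation of a finite prefix with an infinite sequence. -/
def prefCat {α : Type _} (l : List α) (x : ℕ → α) : ℕ → α := fun n =>
  if h : n < l.length then l.get ⟨n, h⟩ else x (n - l.length)

/-- Player II has a strategy in Gowers' game `G_X(pre)` below `X` to play in `A`:
player I plays infinite-dimensional subspaces `Y i ≤ X`, player II answers with a
nonzero vector of `Y i`, the vectors played by II forming a block sequence, and the
outcome (the prefix `pre` followed by II's vectors) lies in `A`. -/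
def IIWinsG (b : Module.Basis ℕ 𝔽 E) (X : Submodule 𝔽 E) (pre : List E) (A : Set (ℕ → E)) :
    Prop :=
  ∃ σ : List (Submodule 𝔽 E) → E,
    ∀ Y : ℕ → Submodule 𝔽 E,
      (∀ i, Y i ≤ X ∧ ¬FiniteDimensional 𝔽 ↥(Y i)) →
      (∀ i, σ (hist Y (i + 1)) ∈ Y i ∧ σ (hist Y (i + 1)) ≠ 0 ∧
          VecLt b (σ (hist Y (i + 1))) (σ (hist Y (i + 2)))) ∧
        prefCat pre (fun i => σ (hist Y (i + 1))) ∈ A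

/-- Player I has a strategy in the infinite asymptotic game `F_X(pre)` below `X` to play
in `A`: player I plays strictly increasing natural numbers `n i`, player II answers with
nonzero vectors of `X` with `n i < x i` forming a block sequence, and the outcome
(the prefix `pre` followed by II's vectors) lies in `A`. -/
def IWinsF (b : Module.Basis ℕ 𝔽 E) (X : Submodule 𝔽 E) (pre : List E) (A : Set (ℕ → E)) :
    Prop :=
  ∃ σ : List E → ℕ,
    ∀ x : ℕ → E,
      (∀ i, x i ∈ X ∧ x i ≠ 0 ∧ NatLt b (σ (hist x i)) (x i) ∧
          VecLt b (x i) (x (i + 1))) →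
      (∀ i, σ (hist x i) < σ (hist x (i + 1))) ∧ prefCat pre x ∈ A

/-- A set `A ⊆ E^∞` is strategically Ramsey if for every block subspace `V` and every
finite block sequence `z`, there is a block subspace `W ≤ V` such that either II has a
strategy in `G_W(z)` to play in `A`, or I has a strategy in `F_W(z)` to play in `Aᶜ`. -/
def StrategicallyRamsey (b : Module.Basis ℕ 𝔽 E) (A : Set (ℕ → E)) : Prop :=
  ∀ V : Submodule 𝔽 E, IsBlockSubspace b V → ∀ z : List E, IsFinBlockSeq b z →
    ∃ W : Submodule 𝔽 E, W ≤ V ∧ IsBlockSubspace b W ∧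
      (IIWinsG b W z A ∨ IWinsF b W z Aᶜ)

/-- `𝔅(X)`: the set of infinite block sequences of vectors of `X` of norm at most `1`. -/
def BlockSeqIn (b : Module.Basis ℕ 𝔽 E) (Nm : E → ℝ) (X : Submodule 𝔽 E) : Set (ℕ → E) :=
  {x | IsBlockSeq b x ∧ ∀ i, x i ∈ X ∧ Nm (x i) ≤ 1}

/-- The `Δ`-expansion `A_Δ` of a set `A ⊆ E^∞`. -/
def Expand (Nm : E → ℝ) (Δ : ℕ → ℝ) (A : Set (ℕ → E)) : Set (ℕ → E) :=
  {z | ∃ x ∈ A, ∀ i, Nm (x i - z i) < Δ i}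

/-- A set `A ⊆ E^∞` is large if it meets `𝔅(X)` for every block subspace `X`. -/
def Large (b : Module.Basis ℕ 𝔽 E) (Nm : E → ℝ) (A : Set (ℕ → E)) : Prop :=
  ∀ X : Submodule 𝔽 E, IsBlockSubspace b X → (A ∩ BlockSeqIn b Nm X).Nonempty

end Defs

section Aux

open Submodule

variable {𝕂 : Subfield ℝ} {E : Type} [AddCommGroup E] [Module 𝕂 E]

lemma supp_zero (b : Module.Basis ℕ 𝕂 E) : supp b (0 : E) = ∅ := by simp [supp]

lemma supp_eq_empty_iff (b : Module.Basis ℕ 𝕂 E) (x : E) : supp b x = ∅ ↔ x = 0 := by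
  rw [supp, Finsupp.support_eq_empty, LinearEquiv.map_eq_zero_iff]

lemma supp_nonempty (b : Module.Basis ℕ 𝕂 E) {x : E} (hx : x ≠ 0) : (supp b x).Nonempty := by
  rw [Finset.nonempty_iff_ne_empty, Ne, supp_eq_empty_iff]; exact hx

lemma supp_add_subset (b : Module.Basis ℕ 𝕂 E) (x y : E) :
    supp b (x + y) ⊆ supp b x ∪ supp b y := by
  intro n hn
  simp only [supp, map_add] at hn ⊢
  exact Finsupp.support_add hn

lemma supp_smul_subset (b : Module.Basis ℕ 𝕂 E) (a : 𝕂) (x : E) :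
    supp b (a • x) ⊆ supp b x := by
  intro n hn
  simp only [supp, map_smul] at hn ⊢
  exact Finsupp.support_smul hn

lemma supp_subset_of_mem_span (b : Module.Basis ℕ 𝕂 E) {s : Set E} {x : E}
    (hx : x ∈ span 𝕂 s) : ∀ n ∈ supp b x, ∃ v ∈ s, n ∈ supp b v := by
  induction hx using Submodule.span_induction with
  | mem v hv => exact fun n hn => ⟨v, hv, hn⟩
  | zero => simp [supp_zero]
  | add x y hx hy ihx ihy =>
      intro n hn
      rcases Finset.mem_union.1 (supp_add_subset b x y hn) with h | h
      · exact ihx n h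
      · exact ihy n h
  | smul a x hx ih => exact fun n hn => ih n (supp_smul_subset b a x hn)

lemma blockSeq_vecLt (b : Module.Basis ℕ 𝕂 E) {u : ℕ → E} (hu : IsBlockSeq b u)
    {i j : ℕ} (h : i < j) : VecLt b (u i) (u j) := by
  induction j with
  | zero => omega
  | succ j ih =>
      rcases Nat.lt_succ_iff_lt_or_eq.1 h with h' | h'
      · intro m hm n hn
        obtain ⟨p, hp⟩ := supp_nonempty b (hu.1 j)
        exact lt_trans (ih h' m hm p hp) (hu.2 j p hp n hn)
      · subst h'; exact hu.2 i

lemma blockSeq_le_supp (b : Module.Basis ℕ 𝕂 E) {u : ℕ → E} (hu : IsBlockSeq b u) :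
    ∀ j, ∀ n ∈ supp b (u j), j ≤ n := by
  intro j
  induction j with
  | zero => exact fun n _ => Nat.zero_le n
  | succ j ih =>
      intro n hn
      obtain ⟨p, hp⟩ := supp_nonempty b (hu.1 j)
      exact Nat.succ_le_of_lt (lt_of_le_of_lt (ih p hp) (hu.2 j p hp n hn))

lemma supp_disjoint (b : Module.Basis ℕ 𝕂 E) {u : ℕ → E} (hu : IsBlockSeq b u)
    {i j n : ℕ} (hij : i ≠ j) (hi : n ∈ supp b (u i)) (hj : n ∈ supp b (u j)) : False := by
  rcases hij.lt_or_gt with h | h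
  · exact lt_irrefl n (blockSeq_vecLt b hu h n hi n hj)
  · exact lt_irrefl n (blockSeq_vecLt b hu h n hj n hi)

end Aux

section Aux2

open Submodule

variable {𝕂 : Subfield ℝ} {E : Type} [AddCommGroup E] [Module 𝕂 E]

section Norm

variable (Nm : E → ℝ)
  (hN0 : ∀ x : E, Nm x = 0 ↔ x = 0)
  (hNadd : ∀ x y : E, Nm (x + y) ≤ Nm x + Nm y)
  (hNsmul : ∀ (a : 𝕂) (x : E), Nm (a • x) = |(a : ℝ)| * Nm x)

include hNsmul in
lemma Nm_neg (x : E) : Nm (-x) = Nm x := by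
  have : (-1 : 𝕂) • x = -x := by simp
  rw [← this, hNsmul]
  norm_num

include hN0 hNadd hNsmul in
lemma Nm_nonneg (x : E) : 0 ≤ Nm x := by
  have h := hNadd x (-x)
  rw [add_neg_cancel, (hN0 0).2 rfl, Nm_neg Nm hNsmul] at h
  linarith

include hN0 hNadd hNsmul in
lemma Nm_pos {x : E} (hx : x ≠ 0) : 0 < Nm x :=
  lt_of_le_of_ne (Nm_nonneg Nm hN0 hNadd hNsmul x) (fun h => hx ((hN0 x).1 h.symm))

include hNadd hNsmul in
lemma Nm_sub_le (x y z : E) : Nm (x - z) ≤ Nm (x - y) + Nm (y - z) := by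
  have : x - z = (x - y) + (y - z) := by abel
  rw [this]; exact hNadd _ _

end Norm

/-- grid of elements of `𝕂` approximating reals of modulus at most `M` to within `μ`. -/
lemma exists_grid (𝕂 : Subfield ℝ) (M μ : ℝ) (hμ : 0 < μ) :
    ∃ G : Finset 𝕂, ∀ c : 𝕂, |(c : ℝ)| ≤ M → ∃ q ∈ G, |(c : ℝ) - (q : ℝ)| < μ := by
  classical
  obtain ⟨r, hr0, hrμ⟩ := exists_rat_btwn hμ
  have hr0' : (0 : ℝ) < (r : ℝ) := hr0
  set K : ℤ := ⌈M / (r : ℝ)⌉ + 1 with hK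
  refine ⟨(Finset.Icc (-K) K).image (fun k : ℤ => (k : 𝕂) * (r : 𝕂)), ?_⟩
  intro c hc
  set k : ℤ := ⌊(c : ℝ) / (r : ℝ)⌋ with hk
  have h1 : (k : ℝ) ≤ (c : ℝ) / (r : ℝ) := Int.floor_le _
  have h2 : (c : ℝ) / (r : ℝ) < k + 1 := Int.lt_floor_add_one _
  refine ⟨(k : 𝕂) * (r : 𝕂), Finset.mem_image.2 ⟨k, ?_, rfl⟩, ?_⟩
  · rw [Finset.mem_Icc]
    have habs := abs_le.1 hc
    have hcM : (c : ℝ) / (r : ℝ) ≤ M / (r : ℝ) := by gcongr; exact habs.2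
    have hcM' : -(M / (r : ℝ)) ≤ (c : ℝ) / (r : ℝ) := by
      rw [← neg_div]
      gcongr
      exact habs.1
    constructor
    · have h3 : (⌊-(M / (r : ℝ))⌋ : ℤ) ≤ k := Int.floor_le_floor hcM'
      rw [Int.floor_neg] at h3
      omega
    · have h4 : k ≤ ⌈M / (r : ℝ)⌉ := by
        have : (k : ℝ) ≤ (⌈M / (r : ℝ)⌉ : ℝ) := le_trans (le_trans h1 hcM) (Int.le_ceil _)
        exact_mod_cast this
      omega
  · have hq : (((k : 𝕂) * (r : 𝕂) : 𝕂) : ℝ) = (k : ℝ) * (r : ℝ) := by push_cast; ring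
    rw [hq, abs_lt]
    have hkr : (k : ℝ) * (r : ℝ) ≤ (c : ℝ) := (le_div_iff₀ hr0').1 h1
    have hkr2 : (c : ℝ) < ((k : ℝ) + 1) * (r : ℝ) := (div_lt_iff₀ hr0').1 h2
    constructor <;> nlinarith


section Net

variable (Nm : E → ℝ)
  (hN0 : ∀ x : E, Nm x = 0 ↔ x = 0)
  (hNadd : ∀ x y : E, Nm (x + y) ≤ Nm x + Nm y)
  (hNsmul : ∀ (a : 𝕂) (x : E), Nm (a • x) = |(a : ℝ)| * Nm x)

include hN0 hNadd hNsmul in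
lemma exists_net : ∀ (l : List E) (R δ : ℝ), 0 < δ →
    ∃ N : Finset E, (∀ y ∈ N, y ∈ span 𝕂 {v : E | v ∈ l}) ∧
      ∀ v ∈ span 𝕂 {v : E | v ∈ l}, Nm v ≤ R → ∃ y ∈ N, Nm (v - y) < δ := by
  intro l
  induction l with
  | nil =>
      intro R δ hδ
      refine ⟨{0}, by simp, ?_⟩
      intro v hv _
      have hv0 : v = 0 := by
        have : {v : E | v ∈ ([] : List E)} = (∅ : Set E) := by ext v; simp
        rw [this, Submodule.span_empty, Submodule.mem_bot] at hv
        exact hv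
      exact ⟨0, Finset.mem_singleton_self 0, by simp [hv0, (hN0 0).2 rfl, hδ]⟩
  | cons a t ih =>
      intro R δ hδ
      have hset : {v : E | v ∈ a :: t} = insert a {v : E | v ∈ t} := by ext v; simp
      have hsub : span 𝕂 {v : E | v ∈ t} ≤ span 𝕂 {v : E | v ∈ a :: t} := by
        apply Submodule.span_mono; intro v hv; simp at hv ⊢; exact Or.inr hv
      have hamem : a ∈ span 𝕂 {v : E | v ∈ a :: t} :=
        Submodule.subset_span (by simp)
      by_cases hdeg : ∀ ε > (0:ℝ), ∃ z ∈ span 𝕂 {v : E | v ∈ t}, Nm (a + z) < ε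
      · -- degenerate case: a is in the closure of span t
        obtain ⟨N, hN1, hN2⟩ := ih (R + δ) (δ/3) (by linarith)
        refine ⟨N, fun y hy => hsub (hN1 y hy), ?_⟩
        intro v hv hvR
        rw [hset, Submodule.mem_span_insert] at hv
        obtain ⟨c, z, hz, rfl⟩ := hv
        have hc1 : (0:ℝ) < |(c : ℝ)| + 1 := by positivity
        obtain ⟨z', hz', hz'lt⟩ := hdeg (δ/(3*(|(c : ℝ)| + 1))) (by positivity)
        set v'' := z - c • z' with hv''
        have hdiff : c • a + z - v'' = c • (a + z') := by
          rw [hv'', smul_add]; abel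
        have hdnorm : Nm (c • a + z - v'') < δ/3 := by
          rw [hdiff, hNsmul]
          calc |(c:ℝ)| * Nm (a + z') ≤ (|(c:ℝ)| + 1) * Nm (a + z') := by
                have := Nm_nonneg Nm hN0 hNadd hNsmul (a + z')
                nlinarith
            _ < (|(c:ℝ)| + 1) * (δ/(3*(|(c : ℝ)| + 1))) := by
                apply mul_lt_mul_of_pos_left hz'lt hc1
            _ = δ/3 := by field_simp
        have hv''mem : v'' ∈ span 𝕂 {v : E | v ∈ t} :=
          Submodule.sub_mem _ hz (Submodule.smul_mem _ c hz')
        have hv''R : Nm v'' ≤ R + δ := by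
          have h1 : Nm v'' ≤ Nm (c • a + z) + Nm (v'' - (c • a + z)) := by
            have : v'' = (c • a + z) + (v'' - (c • a + z)) := by abel
            nth_rewrite 1 [this]; exact hNadd _ _
          have h2 : Nm (v'' - (c • a + z)) = Nm (c • a + z - v'') := by
            have : v'' - (c • a + z) = -(c • a + z - v'') := by abel
            rw [this, Nm_neg Nm hNsmul]
          linarith
        obtain ⟨y, hyN, hy⟩ := hN2 v'' hv''mem hv''R
        refine ⟨y, hyN, ?_⟩
        calc Nm (c • a + z - y) ≤ Nm (c • a + z - v'') + Nm (v'' - y) :=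
              Nm_sub_le Nm hNadd hNsmul _ _ _
          _ < δ/3 + δ/3 := by linarith
          _ < δ := by linarith
      · -- nondegenerate case
        push_neg at hdeg
        obtain ⟨ε, hε, hsep⟩ := hdeg
        have hNa : ε ≤ Nm a := by simpa using hsep (0 : E) (Submodule.zero_mem _)
        have hNapos : (0:ℝ) < Nm a := lt_of_lt_of_le hε hNa
        obtain ⟨G, hG⟩ := exists_grid 𝕂 (R/ε) (δ/(3 * Nm a)) (by positivity)
        obtain ⟨N, hN1, hN2⟩ := ih (R + (R/ε) * Nm a) (δ/3) (by linarith)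
        classical
        refine ⟨(G ×ˢ N).image (fun p => (p.1 : 𝕂) • a + p.2), ?_, ?_⟩
        · intro y hy
          obtain ⟨⟨q, y'⟩, hqy, rfl⟩ := Finset.mem_image.1 hy
          exact Submodule.add_mem _ (Submodule.smul_mem _ _ hamem) (hsub (hN1 y' (Finset.mem_product.1 hqy).2))
        · intro v hv hvR
          rw [hset, Submodule.mem_span_insert] at hv
          obtain ⟨c, z, hz, rfl⟩ := hv
          have hvnn : 0 ≤ Nm (c • a + z) := Nm_nonneg Nm hN0 hNadd hNsmul _
          have hRnn : 0 ≤ R := le_trans hvnn hvR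
          -- coefficient bound
          have hcb : |(c : ℝ)| ≤ R / ε := by
            rcases eq_or_ne c 0 with rfl | hc
            · simpa using by positivity
            · have hz'' : (c⁻¹ : 𝕂) • z ∈ span 𝕂 {v : E | v ∈ t} := Submodule.smul_mem _ _ hz
              have h1 : ε ≤ Nm (a + (c⁻¹ : 𝕂) • z) := hsep _ hz''
              have h2 : Nm (c • a + z) = |(c : ℝ)| * Nm (a + (c⁻¹ : 𝕂) • z) := by
                rw [← hNsmul]
                congr 1
                rw [smul_add, smul_smul, mul_inv_cancel₀ hc, one_smul]
              have hcpos : (0:ℝ) < |(c : ℝ)| := by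
                simp only [abs_pos, ne_eq]
                exact_mod_cast hc
              rw [le_div_iff₀ hε]
              calc |(c:ℝ)| * ε ≤ |(c:ℝ)| * Nm (a + (c⁻¹ : 𝕂) • z) := by nlinarith
                _ = Nm (c • a + z) := h2.symm
                _ ≤ R := hvR
          obtain ⟨q, hqG, hq⟩ := hG c hcb
          have hznorm : Nm z ≤ R + (R/ε) * Nm a := by
            have h1 : Nm z ≤ Nm (c • a + z) + Nm (c • a) := by
              have : z = (c • a + z) + (-(c • a)) := by abel
              nth_rewrite 1 [this]
              exact le_trans (hNadd _ _) (by rw [Nm_neg Nm hNsmul])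
            rw [hNsmul] at h1
            have : |(c:ℝ)| * Nm a ≤ (R/ε) * Nm a := by nlinarith
            linarith
          obtain ⟨y', hy'N, hy'⟩ := hN2 z hz hznorm
          refine ⟨(q : 𝕂) • a + y', Finset.mem_image.2 ⟨(q, y'), Finset.mem_product.2 ⟨hqG, hy'N⟩, rfl⟩, ?_⟩
          have hkey : c • a + z - ((q : 𝕂) • a + y') = ((c - q : 𝕂)) • a + (z - y') := by
            rw [sub_smul]; abel
          rw [hkey]
          calc Nm ((c - q : 𝕂) • a + (z - y')) ≤ Nm ((c - q : 𝕂) • a) + Nm (z - y') := hNadd _ _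
            _ = |((c : ℝ) - (q : ℝ))| * Nm a + Nm (z - y') := by rw [hNsmul]; push_cast; ring_nf
            _ < (δ/(3 * Nm a)) * Nm a + δ/3 := by
                apply add_lt_add_of_lt_of_le (by nlinarith) (le_of_lt hy')
            _ = δ/3 + δ/3 := by field_simp
            _ ≤ δ := by linarith
  
include hN0 hNadd hNsmul in
lemma exists_net_nonzero (l : List E) (w0 : E) (hw0l : w0 ∈ l) (hw0 : w0 ≠ 0)
    (δ : ℝ) (hδ : 0 < δ) :
    ∃ N : Finset E, (∀ y ∈ N, y ∈ span 𝕂 {v : E | v ∈ l} ∧ y ≠ 0) ∧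
      ∀ v ∈ span 𝕂 {v : E | v ∈ l}, Nm v ≤ 1 → ∃ y ∈ N, Nm (v - y) < δ := by
  classical
  obtain ⟨N, hN1, hN2⟩ := exists_net Nm hN0 hNadd hNsmul l 1 (δ/2) (by linarith)
  have hw0pos : 0 < Nm w0 := Nm_pos Nm hN0 hNadd hNsmul hw0
  obtain ⟨r, hr0, hrlt⟩ := exists_rat_btwn (show (0:ℝ) < δ/(2 * Nm w0) by positivity)
  set z0 : E := (r : 𝕂) • w0 with hz0
  have hrne : ((r : 𝕂) : ℝ) = (r : ℝ) := by push_cast; ring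
  have hrK : (r : 𝕂) ≠ 0 := by
    intro h
    have : ((r : 𝕂) : ℝ) = 0 := by rw [h]; simp
    rw [hrne] at this
    exact absurd this (ne_of_gt hr0)
  have hz0ne : z0 ≠ 0 := smul_ne_zero hrK hw0
  have hz0norm : Nm z0 < δ/2 := by
    rw [hz0, hNsmul, hrne, abs_of_pos hr0]
    calc (r:ℝ) * Nm w0 < (δ/(2 * Nm w0)) * Nm w0 := by nlinarith
      _ = δ/2 := by field_simp
  have hz0mem : z0 ∈ span 𝕂 {v : E | v ∈ l} :=
    Submodule.smul_mem _ _ (Submodule.subset_span hw0l)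
  refine ⟨N.image (fun y => if y = 0 then z0 else y), ?_, ?_⟩
  · intro y hy
    obtain ⟨y', hy', rfl⟩ := Finset.mem_image.1 hy
    by_cases h : y' = 0
    · simp only [h, if_pos rfl]
      exact ⟨hz0mem, hz0ne⟩
    · simp only [if_neg h]
      exact ⟨hN1 y' hy', h⟩
  · intro v hv hv1
    obtain ⟨y, hyN, hy⟩ := hN2 v hv hv1
    by_cases h : y = 0
    · refine ⟨z0, Finset.mem_image.2 ⟨y, hyN, by rw [if_pos h]⟩, ?_⟩
      subst h
      have h1 : Nm v < δ/2 := by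
        have : v - 0 = v := by abel
        rwa [this] at hy
      calc Nm (v - z0) ≤ Nm v + Nm (-z0) := by
            have : v - z0 = v + (-z0) := by abel
            rw [this]; exact hNadd _ _
        _ = Nm v + Nm z0 := by rw [Nm_neg Nm hNsmul]
        _ < δ := by linarith
    · exact ⟨y, Finset.mem_image.2 ⟨y, hyN, by rw [if_neg h]⟩, by linarith⟩

end Net

/-- A canonical choice of net. -/
noncomputable def netOf (𝕂 : Subfield ℝ) {E : Type} [AddCommGroup E] [Module 𝕂 E]
    (Nm : E → ℝ) (l : List E) (δ : ℝ) : Finset E :=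
  letI := Classical.dec
  if h : ∃ N : Finset E, (∀ y ∈ N, y ∈ span 𝕂 {v : E | v ∈ l} ∧ y ≠ 0) ∧
      ∀ v ∈ span 𝕂 {v : E | v ∈ l}, Nm v ≤ 1 → ∃ y ∈ N, Nm (v - y) < δ
  then h.choose else ∅

lemma netOf_spec (Nm : E → ℝ)
    (hN0 : ∀ x : E, Nm x = 0 ↔ x = 0)
    (hNadd : ∀ x y : E, Nm (x + y) ≤ Nm x + Nm y)
    (hNsmul : ∀ (a : 𝕂) (x : E), Nm (a • x) = |(a : ℝ)| * Nm x)
    (l : List E) (w0 : E) (hw0l : w0 ∈ l) (hw0 : w0 ≠ 0) (δ : ℝ) (hδ : 0 < δ) :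
    (∀ y ∈ netOf 𝕂 Nm l δ, y ∈ span 𝕂 {v : E | v ∈ l} ∧ y ≠ 0) ∧
      ∀ v ∈ span 𝕂 {v : E | v ∈ l}, Nm v ≤ 1 → ∃ y ∈ netOf 𝕂 Nm l δ, Nm (v - y) < δ := by
  have h := exists_net_nonzero Nm hN0 hNadd hNsmul l w0 hw0l hw0 δ hδ
  rw [netOf, dif_pos h]
  exact h.choose_spec

/-- Minimum of `Δ 0, ..., Δ p`. -/
noncomputable def epsm (Δ : ℕ → ℝ) : ℕ → ℝ
  | 0 => Δ 0
  | p+1 => min (epsm Δ p) (Δ (p+1))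

lemma epsm_pos {Δ : ℕ → ℝ} (hΔ : ∀ i, 0 < Δ i) (p : ℕ) : 0 < epsm Δ p := by
  induction p with
  | zero => exact hΔ 0
  | succ p ih => exact lt_min ih (hΔ (p+1))

lemma epsm_le {Δ : ℕ → ℝ} {i p : ℕ} (h : i ≤ p) : epsm Δ p ≤ Δ i := by
  induction p with
  | zero => simp_all [epsm]
  | succ p ih =>
      rw [epsm]
      rcases Nat.lt_succ_iff_lt_or_eq.1 (Nat.lt_succ_of_le h) with h' | h'
      · exact le_trans (min_le_left _ _) (ih (Nat.lt_succ_iff.1 h'))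
      · subst h'; exact min_le_right _ _

/-- All lists of length at most `n` with entries in `s`. -/
def listsLE {α : Type _} [DecidableEq α] (s : Finset α) : ℕ → Finset (List α)
  | 0 => {[]}
  | n+1 => listsLE s n ∪ s.biUnion (fun a => (listsLE s n).image (a :: ·))

lemma mem_listsLE {α : Type _} [DecidableEq α] {s : Finset α} :
    ∀ {n : ℕ} {l : List α}, l.length ≤ n → (∀ x ∈ l, x ∈ s) → l ∈ listsLE s n := by
  intro n
  induction n with
  | zero =>
      intro l hl _
      rw [List.length_eq_zero_iff.1 (Nat.le_zero.1 hl)]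
      simp [listsLE]
  | succ n ih =>
      intro l hl hx
      rw [listsLE]
      cases l with
      | nil => exact Finset.mem_union_left _ (ih (by simp) (by simp))
      | cons a t =>
          apply Finset.mem_union_right
          refine Finset.mem_biUnion.2 ⟨a, hx a (by simp), ?_⟩
          refine Finset.mem_image.2 ⟨t, ih ?_ ?_, rfl⟩
          · simpa using Nat.succ_le_succ_iff.1 hl
          · exact fun x hxt => hx x (by simp [hxt])

lemma drop_range' : ∀ (k s n : ℕ), (List.range' s n).drop k = List.range' (s + k) (n - k) := by
  intro k
  induction k with
  | zero => simp
  | succ k ih =>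
      intro s n
      cases n with
      | zero => simp
      | succ n =>
          rw [List.range'_succ, List.drop_succ_cons, ih (s+1) n]
          congr 1 <;> omega

lemma drop_range (p n : ℕ) : (List.range n).drop p = List.range' p (n - p) := by
  rw [List.range_eq_range', drop_range']
  norm_num

section Constr

variable (𝕂 : Subfield ℝ) {E : Type} [AddCommGroup E] [Module 𝕂 E]
  (Nm : E → ℝ) (u : ℕ → E) (Δ : ℕ → ℝ) (σ : List E → ℕ)

/-- The collection of all vectors in nets associated to windows `[p,q]`, `p ≤ q < l.length`,
of the block sequence indexed by the prefix `l`. -/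
noncomputable def NetsAt (l : List ℕ) : Finset E :=
  letI := Classical.decEq E
  (Finset.range l.length).biUnion fun q =>
    (Finset.range (q+1)).biUnion fun p =>
      netOf 𝕂 Nm (((l.map u).take (q+1)).drop p) (epsm Δ p)

/-- The strategy bound associated to a prefix of indices. -/
noncomputable def BndL (l : List ℕ) : ℕ :=
  letI := Classical.decEq E
  (listsLE (NetsAt 𝕂 Nm u Δ l) l.length).sup σ

/-- The next index to pick, given the prefix `l` of indices already picked. -/
noncomputable def stepf (l : List ℕ) : ℕ :=
  BndL 𝕂 Nm u Δ σ l + l.foldr max 0 + 1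

/-- The prefix of the first `m` indices. -/
noncomputable def iterL : ℕ → List ℕ
  | 0 => []
  | m+1 => iterL m ++ [stepf 𝕂 Nm u Δ σ (iterL m)]

/-- The diagonal sequence of indices. -/
noncomputable def jdx (m : ℕ) : ℕ := stepf 𝕂 Nm u Δ σ (iterL 𝕂 Nm u Δ σ m)

/-- The diagonal block sequence. -/
noncomputable def wv (m : ℕ) : E := u (jdx 𝕂 Nm u Δ σ m)

lemma iterL_eq (m : ℕ) : iterL 𝕂 Nm u Δ σ m = (List.range m).map (jdx 𝕂 Nm u Δ σ) := by
  induction m with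
  | zero => simp [iterL]
  | succ m ih =>
      rw [iterL, List.range_succ, List.map_append, List.map_singleton, ← ih]
      rfl

lemma length_iterL (m : ℕ) : (iterL 𝕂 Nm u Δ σ m).length = m := by
  rw [iterL_eq]; simp

lemma jdx_strictMono {k m : ℕ} (h : k < m) : jdx 𝕂 Nm u Δ σ k < jdx 𝕂 Nm u Δ σ m := by
  have hmem : jdx 𝕂 Nm u Δ σ k ∈ iterL 𝕂 Nm u Δ σ m := by
    rw [iterL_eq]
    exact List.mem_map.2 ⟨k, List.mem_range.2 h, rfl⟩
  have hle : ∀ (l : List ℕ) (a : ℕ), a ∈ l → a ≤ l.foldr max 0 := by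
    intro l
    induction l with
    | nil => simp
    | cons x t ih =>
        intro a ha
        rcases List.mem_cons.1 ha with rfl | ha
        · exact le_max_left _ _
        · exact le_trans (ih a ha) (le_max_right _ _)
  have := hle _ _ hmem
  show jdx 𝕂 Nm u Δ σ k < stepf 𝕂 Nm u Δ σ (iterL 𝕂 Nm u Δ σ m)
  rw [stepf]
  omega

lemma jdx_mono {k m : ℕ} (h : k ≤ m) : jdx 𝕂 Nm u Δ σ k ≤ jdx 𝕂 Nm u Δ σ m := by
  rcases Nat.lt_or_ge k m with h' | h'
  · exact le_of_lt (jdx_strictMono 𝕂 Nm u Δ σ h')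
  · have : k = m := le_antisymm h h'
    rw [this]

lemma le_BndL (l : List ℕ) (h : List E) (hlen : h.length ≤ l.length)
    (hmem : ∀ v ∈ h, v ∈ NetsAt 𝕂 Nm u Δ l) : σ h ≤ BndL 𝕂 Nm u Δ σ l := by
  letI := Classical.decEq E
  show σ h ≤ (listsLE (NetsAt 𝕂 Nm u Δ l) l.length).sup σ
  exact Finset.le_sup (mem_listsLE hlen hmem)

lemma sup_lt_jdx (m : ℕ) :
    BndL 𝕂 Nm u Δ σ (iterL 𝕂 Nm u Δ σ m) < jdx 𝕂 Nm u Δ σ m := by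
  show _ < stepf 𝕂 Nm u Δ σ (iterL 𝕂 Nm u Δ σ m)
  rw [stepf]
  omega

/-- The canonical net for window `[p, q]`. -/
noncomputable def netPQ (p q : ℕ) : Finset E :=
  netOf 𝕂 Nm ((List.range' p (q + 1 - p)).map (wv 𝕂 Nm u Δ σ)) (epsm Δ p)

lemma netPQ_subset_netsAt {p q m : ℕ} (hpq : p ≤ q) (hqm : q < m) :
    netPQ 𝕂 Nm u Δ σ p q ⊆ NetsAt 𝕂 Nm u Δ (iterL 𝕂 Nm u Δ σ m) := by
  letI := Classical.decEq E
  intro y hy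
  rw [NetsAt]
  refine Finset.mem_biUnion.2 ⟨q, Finset.mem_range.2 (by rw [length_iterL]; exact hqm), ?_⟩
  refine Finset.mem_biUnion.2 ⟨p, Finset.mem_range.2 (Nat.lt_succ_of_le hpq), ?_⟩
  have hlist : (((iterL 𝕂 Nm u Δ σ m).map u).take (q+1)).drop p
      = (List.range' p (q + 1 - p)).map (wv 𝕂 Nm u Δ σ) := by
    rw [iterL_eq, List.map_map]
    have : u ∘ jdx 𝕂 Nm u Δ σ = wv 𝕂 Nm u Δ σ := rfl
    rw [this, ← List.map_take, ← List.map_drop, List.take_range, drop_range]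
    have h2 : (q+1) ⊓ m - p = q + 1 - p := by omega
    rw [h2]
  rw [hlist]
  exact hy

end Constr

end Aux2

section MoreAux

open Submodule

variable {𝕂 : Subfield ℝ} {E : Type} [AddCommGroup E] [Module 𝕂 E]

lemma prefCat_nil {α : Type _} (x : ℕ → α) : prefCat [] x = x := by
  funext n
  simp [prefCat]

lemma length_hist {α : Type _} (x : ℕ → α) (n : ℕ) : (hist x n).length = n := by
  simp [hist]

lemma repr_sum_apply (b : Module.Basis ℕ 𝕂 E) {w : ℕ → E} (hw : IsBlockSeq b w) (c : ℕ →₀ 𝕂)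
    {j n : ℕ} (hj : j ∈ c.support) (hn : n ∈ supp b (w j)) :
    b.repr (c.sum fun i a => a • w i) n = c j * b.repr (w j) n := by
  rw [map_finsuppSum, Finsupp.sum_apply, Finsupp.sum,
    Finset.sum_eq_single_of_mem j hj]
  · rw [map_smul, Finsupp.smul_apply, smul_eq_mul]
  · intro i hi hij
    have hni : n ∉ supp b (w i) := fun h => supp_disjoint b hw hij h hn
    rw [supp, Finsupp.notMem_support_iff] at hni
    rw [map_smul, Finsupp.smul_apply, hni, smul_zero]

end MoreAux

theorem IIWinsG_of_strategicallyRamsey_of_large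
    (𝕂 : Subfield ℝ) [Countable 𝕂]
    {E : Type} [AddCommGroup E] [Module 𝕂 E]
    (b : Module.Basis ℕ 𝕂 E) (Nm : E → ℝ)
    (hN0 : ∀ x : E, Nm x = 0 ↔ x = 0)
    (hNadd : ∀ x y : E, Nm (x + y) ≤ Nm x + Nm y)
    (hNsmul : ∀ (a : 𝕂) (x : E), Nm (a • x) = |(a : ℝ)| * Nm x)
    (hNval : ∀ x : E, Nm x ∈ 𝕂)
    (A : Set (ℕ → E)) (hA : StrategicallyRamsey b A)
    (Δ : ℕ → ℝ) (hΔ : ∀ i, 0 < Δ i)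
    (hlarge : Large b Nm (Expand Nm Δ Aᶜ)ᶜ) :
    ∃ X : Submodule 𝕂 E, IsBlockSubspace b X ∧ IIWinsG b X [] A := by
  classical
  -- `⊤` is a block subspace
  have hsuppb : ∀ j : ℕ, supp b (b j) = {j} := by
    intro j
    rw [supp, b.repr_self]
    exact Finsupp.support_single_ne_zero _ one_ne_zero
  have hbtop : IsBlockSubspace b (⊤ : Submodule 𝕂 E) := by
    refine ⟨⇑b, ⟨fun n => b.ne_zero n, ?_⟩, b.span_eq.symm⟩
    intro n m hm k hk
    rw [hsuppb n] at hm
    rw [hsuppb (n+1)] at hk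
    rw [Finset.mem_singleton] at hm hk
    omega
  obtain ⟨W, hWle, hWblock, hcase⟩ := hA ⊤ hbtop [] ⟨by simp, List.isChain_nil⟩
  rcases hcase with hII | hI
  · exact ⟨W, hWblock, hII⟩
  exfalso
  obtain ⟨u, hu, hWspan⟩ := hWblock
  obtain ⟨σ, hσ⟩ := hI
  set w : ℕ → E := wv 𝕂 Nm u Δ σ with hwdef
  have hwblock : IsBlockSeq b w :=
    ⟨fun m => hu.1 _, fun m => blockSeq_vecLt b hu (jdx_strictMono 𝕂 Nm u Δ σ (Nat.lt_succ_self m))⟩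
  set Y : Submodule 𝕂 E := Submodule.span 𝕂 (Set.range w) with hYdef
  have hYblock : IsBlockSubspace b Y := ⟨w, hwblock, rfl⟩
  have hYW : Y ≤ W := by
    rw [hWspan]
    apply Submodule.span_le.2
    rintro _ ⟨m, rfl⟩
    exact Submodule.subset_span ⟨jdx 𝕂 Nm u Δ σ m, rfl⟩
  obtain ⟨x, hxInt, hxB⟩ := hlarge Y hYblock
  obtain ⟨hxBlock, hxY⟩ := hxB
  -- representations of the `x i` in terms of the `w j`
  have hrep : ∀ i, ∃ c : ℕ →₀ 𝕂, (c.sum fun j a => a • w j) = x i :=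
    fun i => Finsupp.mem_span_range_iff_exists_finsupp.1 (hxY i).1
  choose c hc using hrep
  have hcne : ∀ i, (c i).support.Nonempty := by
    intro i
    rw [Finset.nonempty_iff_ne_empty]
    intro h
    apply hxBlock.1 i
    rw [← hc i, Finsupp.support_eq_empty.1 h, Finsupp.sum_zero_index]
  set mA : ℕ → ℕ := fun i => (c i).support.min' (hcne i) with hmAdef
  set eA : ℕ → ℕ := fun i => (c i).support.max' (hcne i) with heAdef
  have hmA_le_eA : ∀ i, mA i ≤ eA i := fun i => Finset.min'_le _ _ (Finset.max'_mem _ _)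
  -- the support of `w j` is contained in that of `x i` for `j` in the support of `c i`
  have hK1 : ∀ i, ∀ j ∈ (c i).support, ∀ n ∈ supp b (w j), n ∈ supp b (x i) := by
    intro i j hj n hn
    have h1 := repr_sum_apply b hwblock (c i) hj hn
    rw [hc i] at h1
    rw [supp, Finsupp.mem_support_iff, h1]
    exact mul_ne_zero (Finsupp.mem_support_iff.1 hj)
      (by rwa [supp, Finsupp.mem_support_iff] at hn)
  -- the windows are increasing
  have hord : ∀ i, eA i < mA (i+1) := by
    intro i
    by_contra hcon
    push_neg at hcon
    obtain ⟨n', hn'⟩ := supp_nonempty b (hwblock.1 (mA (i+1)))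
    have hn'x : n' ∈ supp b (x (i+1)) :=
      hK1 (i+1) _ (Finset.min'_mem _ _) n' hn'
    rcases Nat.lt_or_ge (mA (i+1)) (eA i) with hlt | hge
    · obtain ⟨n, hn⟩ := supp_nonempty b (hwblock.1 (eA i))
      have hnx : n ∈ supp b (x i) := hK1 i _ (Finset.max'_mem _ _) n hn
      have h1 : n' < n := blockSeq_vecLt b hwblock hlt n' hn' n hn
      have h2 : n < n' := hxBlock.2 i n hnx n' hn'x
      omega
    · have heq : mA (i+1) = eA i := le_antisymm hcon hge
      rw [heq] at hn'
      have hnx : n' ∈ supp b (x i) := hK1 i _ (Finset.max'_mem _ _) n' hn'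
      exact lt_irrefl n' (hxBlock.2 i n' hnx n' hn'x)
  have hmA_mono : ∀ i, mA i < mA (i+1) := fun i => lt_of_le_of_lt (hmA_le_eA i) (hord i)
  have hi_le_mA : ∀ i, i ≤ mA i := by
    intro i
    induction i with
    | zero => exact Nat.zero_le _
    | succ i ih => exact Nat.succ_le_of_lt (lt_of_le_of_lt ih (hmA_mono i))
  have heA_lt_mA : ∀ i' i, i' < i → eA i' < mA i := by
    intro i' i h
    induction i with
    | zero => omega
    | succ i ih =>
        rcases Nat.lt_succ_iff_lt_or_eq.1 h with h' | h'
        · exact lt_of_lt_of_le (ih h') (le_of_lt (hmA_mono i))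
        · subst h'; exact hord i'
  -- choose net points approximating the `x i`
  have hnet : ∀ i, ∃ z : E, z ∈ netPQ 𝕂 Nm u Δ σ (mA i) (eA i) ∧
      (z ∈ Submodule.span 𝕂 {v : E | v ∈ (List.range' (mA i) (eA i + 1 - mA i)).map w} ∧ z ≠ 0) ∧
      Nm (x i - z) < epsm Δ (mA i) := by
    intro i
    have hw0l : w (mA i) ∈ (List.range' (mA i) (eA i + 1 - mA i)).map w :=
      List.mem_map.2 ⟨mA i, List.mem_range'_1.2 ⟨le_refl _, by have := hmA_le_eA i; omega⟩, rfl⟩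
    have hspec := netOf_spec Nm hN0 hNadd hNsmul _ (w (mA i)) hw0l
      (hwblock.1 (mA i)) (epsm Δ (mA i)) (epsm_pos hΔ _)
    have hxmem : x i ∈ Submodule.span 𝕂
        {v : E | v ∈ (List.range' (mA i) (eA i + 1 - mA i)).map w} := by
      rw [← hc i, Finsupp.sum]
      apply Submodule.sum_mem
      intro j hj
      apply Submodule.smul_mem
      apply Submodule.subset_span
      have h1 : mA i ≤ j := Finset.min'_le _ _ hj
      have h2 : j ≤ eA i := Finset.le_max' _ _ hj
      exact List.mem_map.2 ⟨j, List.mem_range'_1.2 ⟨h1, by omega⟩, rfl⟩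
    obtain ⟨z, hzN, hzlt⟩ := hspec.2 (x i) hxmem (hxY i).2
    exact ⟨z, hzN, hspec.1 z hzN, hzlt⟩
  choose y hyPQ hymem hyclose using hnet
  -- support windows of the `y i`
  have hysupp : ∀ i, ∀ n ∈ supp b (y i), ∃ j, mA i ≤ j ∧ j ≤ eA i ∧ n ∈ supp b (w j) := by
    intro i n hn
    obtain ⟨v, hv, hnv⟩ := supp_subset_of_mem_span b (hymem i).1 n hn
    obtain ⟨j, hj, rfl⟩ := List.mem_map.1 hv
    have hj' := List.mem_range'_1.1 hj
    exact ⟨j, hj'.1, by omega, hnv⟩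
  -- the `y i` form a legal run of the game against σ
  have hyW : ∀ i, y i ∈ W := by
    intro i
    apply hYW
    apply Submodule.span_le.2 ?_ (hymem i).1
    intro v hv
    obtain ⟨j, _, rfl⟩ := List.mem_map.1 hv
    exact Submodule.subset_span ⟨j, rfl⟩
  have hyVecLt : ∀ i, VecLt b (y i) (y (i+1)) := by
    intro i n hn n' hn'
    obtain ⟨j, _, hj2, hj3⟩ := hysupp i n hn
    obtain ⟨j', hj'1, _, hj'3⟩ := hysupp (i+1) n' hn'
    have : j < j' := lt_of_le_of_lt hj2 (lt_of_lt_of_le (hord i) hj'1)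
    exact blockSeq_vecLt b hwblock this n hj3 n' hj'3
  have hyNatLt : ∀ i, NatLt b (σ (hist y i)) (y i) := by
    intro i
    have hb1 : σ (hist y i) ≤ BndL 𝕂 Nm u Δ σ (iterL 𝕂 Nm u Δ σ (mA i)) := by
      apply le_BndL
      · rw [length_hist, length_iterL]; exact hi_le_mA i
      · intro v hv
        rw [hist, List.mem_ofFn] at hv
        obtain ⟨⟨i', hi'⟩, rfl⟩ := hv
        exact netPQ_subset_netsAt 𝕂 Nm u Δ σ (hmA_le_eA i') (heA_lt_mA i' i hi') (hyPQ i')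
    intro n hn
    obtain ⟨j, hj1, _, hj3⟩ := hysupp i n hn
    have h2 : jdx 𝕂 Nm u Δ σ (mA i) ≤ jdx 𝕂 Nm u Δ σ j := jdx_mono 𝕂 Nm u Δ σ hj1
    have h3 : jdx 𝕂 Nm u Δ σ j ≤ n := blockSeq_le_supp b hu _ n hj3
    have h4 := sup_lt_jdx 𝕂 Nm u Δ σ (mA i)
    omega
  have hlegal : ∀ i, y i ∈ W ∧ y i ≠ 0 ∧ NatLt b (σ (hist y i)) (y i) ∧
      VecLt b (y i) (y (i+1)) :=
    fun i => ⟨hyW i, (hymem i).2, hyNatLt i, hyVecLt i⟩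
  have hout := (hσ y hlegal).2
  rw [prefCat_nil] at hout
  -- contradiction with `x ∉ (Aᶜ)_Δ`
  apply hxInt
  refine ⟨y, hout, ?_⟩
  intro i
  have h1 : Nm (y i - x i) = Nm (x i - y i) := by
    have : y i - x i = -(x i - y i) := by abel
    rw [this, Nm_neg Nm hNsmul]
  rw [h1]
  exact lt_of_lt_of_le (hyclose i) (epsm_le (hi_le_mA i))
end

section
/- The class of strategically Ramsey subsets of E^∞ is closed under countable unions: if 𝒜ₙ ⊆ E^∞ is strategically Ramsey for every n ∈ ℕ, then ⋃ₙ 𝒜ₙ is strategically Ramsey. -/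
section Aux

open Submodule

variable {𝔽 : Type} [Field 𝔽] {E : Type} [AddCommGroup E] [Module 𝔽 E]

namespace SRU

variable (b : Module.Basis ℕ 𝔽 E)

lemma supp_eq_empty_iff {x : E} : supp b x = ∅ ↔ x = 0 := by
  unfold supp
  rw [Finsupp.support_eq_empty, ← map_zero b.repr]
  exact ⟨fun h => b.repr.injective h, fun h => by rw [h]⟩

lemma natLt_mono {k k' : ℕ} (h : k' ≤ k) {x : E} (hx : NatLt b k x) : NatLt b k' x :=
  fun n hn => lt_of_le_of_lt h (hx n hn)

/-- max of the support (0 if empty) -/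
noncomputable def msup (x : E) : ℕ :=
  if h : (supp b x).Nonempty then (supp b x).max' h else 0

lemma le_msup {x : E} {m : ℕ} (h : m ∈ supp b x) : m ≤ msup b x := by
  unfold msup
  rw [dif_pos ⟨m, h⟩]
  exact Finset.le_max' _ m h

lemma msup_mem {x : E} (hx : x ≠ 0) : msup b x ∈ supp b x := by
  have hne : (supp b x).Nonempty := by
    rw [Finset.nonempty_iff_ne_empty]
    exact fun h => hx ((supp_eq_empty_iff b).1 h)
  unfold msup
  rw [dif_pos hne]
  exact Finset.max'_mem _ _

lemma vecLt_of_natLt_msup {x y : E} (h : NatLt b (msup b x) y) : VecLt b x y :=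
  fun m hm n hn => lt_of_le_of_lt (le_msup b hm) (h n hn)

lemma natLt_msup_of_vecLt {x y : E} (hx : x ≠ 0) (h : VecLt b x y) :
    NatLt b (msup b x) y :=
  fun n hn => h _ (msup_mem b hx) n hn

/-- a bound on all supports of elements of a list -/
noncomputable def msupL (l : List E) : ℕ := (l.map (msup b)).sum

lemma msup_le_msupL {l : List E} {a : E} (h : a ∈ l) : msup b a ≤ msupL b l :=
  List.single_le_sum (fun _ _ => Nat.zero_le _) _ (List.mem_map_of_mem h)

lemma finBlockSeq_append {l : List E} {y : E} (hl : IsFinBlockSeq b l) (hy : y ≠ 0)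
    (h : NatLt b (msupL b l) y) : IsFinBlockSeq b (l ++ [y]) := by
  constructor
  · intro x hx
    rcases List.mem_append.1 hx with h' | h'
    · exact hl.1 x h'
    · rw [List.mem_singleton.1 h']; exact hy
  · rw [show List.Chain' (VecLt b) (l ++ [y]) = List.IsChain (VecLt b) (l ++ [y]) from rfl,
      List.isChain_append]
    refine ⟨hl.2, List.isChain_singleton _, ?_⟩
    intro a ha c hc
    rw [List.head?_eq_head (l := [y]) (by simp)] at hc
    simp at hc
    subst hc
    intro m hm n hn
    exact lt_of_le_of_lt (le_trans (le_msup b hm)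
      (msup_le_msupL b (List.mem_of_mem_getLast? ha))) (h n hn)

/-- The submodule of vectors with support above `k`. -/
def HSub (k : ℕ) : Submodule 𝔽 E where
  carrier := {x | NatLt b k x}
  zero_mem' := by
    intro n hn
    rw [supp, map_zero] at hn
    simp at hn
  add_mem' := by
    intro x y hx hy n hn
    have : n ∈ supp b x ∪ supp b y := by
      apply Finset.mem_of_subset ?_ hn
      rw [supp, map_add]
      exact Finsupp.support_add
    rcases Finset.mem_union.1 this with h | h
    · exact hx n h
    · exact hy n h
  smul_mem' := by
    intro c x hx n hn
    apply hx
    apply Finset.mem_of_subset ?_ hn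
    rw [supp, map_smul]
    exact Finsupp.support_smul

lemma mem_HSub {k : ℕ} {x : E} : x ∈ HSub b k ↔ NatLt b k x := Iff.rfl

end SRU

end Aux
section Aux2

open Submodule Function

variable {𝔽 : Type} [Field 𝔽] {E : Type} [AddCommGroup E] [Module 𝔽 E]

namespace SRU

variable (b : Module.Basis ℕ 𝔽 E)

/-- projection to the first k+1 coordinates -/
noncomputable def proj (k : ℕ) : E →ₗ[𝔽] (Fin (k + 1) → 𝔽) :=
  LinearMap.pi fun i => (Finsupp.lapply (i : ℕ)).comp (b.repr : E →ₗ[𝔽] ℕ →₀ 𝔽)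

lemma ker_proj (k : ℕ) : LinearMap.ker (proj b k) = HSub b k := by
  ext x
  rw [LinearMap.mem_ker, mem_HSub]
  constructor
  · intro h n hn
    by_contra hlt
    push_neg at hlt
    have : b.repr x n = 0 := by
      have := congrFun h ⟨n, Nat.lt_succ_of_le hlt⟩
      simpa [proj] using this
    exact Finsupp.mem_support_iff.1 hn this
  · intro h
    funext i
    simp only [proj, LinearMap.pi_apply, LinearMap.comp_apply, Finsupp.lapply_apply]
    by_contra hne
    have : (i : ℕ) ∈ supp b x := Finsupp.mem_support_iff.2 (by simpa using hne)
    exact absurd (h _ this) (not_lt.2 (Nat.le_of_lt_succ i.2))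

lemma notFD_inf {Y : Submodule 𝔽 E} (hY : ¬FiniteDimensional 𝔽 ↥Y) (k : ℕ) :
    ¬FiniteDimensional 𝔽 ↥(Y ⊓ HSub b k) := by
  intro hfd
  apply hY
  have h1 : (Y.map (proj b k)).FG := by
    have : FiniteDimensional 𝔽 ↥(Y.map (proj b k)) := inferInstance
    exact Module.Finite.iff_fg.1 this
  have h2 : (Y ⊓ LinearMap.ker (proj b k)).FG := by
    rw [ker_proj]
    exact Module.Finite.iff_fg.1 hfd
  exact Module.Finite.iff_fg.2 (Submodule.fg_of_fg_map_of_fg_inf_ker (proj b k) h1 h2)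

lemma exists_high_of_notFD {Y : Submodule 𝔽 E} (hY : ¬FiniteDimensional 𝔽 ↥Y) (k : ℕ) :
    ∃ y ∈ Y, y ≠ 0 ∧ NatLt b k y := by
  have hne : Y ⊓ HSub b k ≠ ⊥ := by
    intro h
    exact notFD_inf b hY k (h ▸ inferInstance)
  rcases Submodule.ne_bot_iff _ |>.1 hne with ⟨y, hy, hy0⟩
  exact ⟨y, hy.1, hy0, hy.2⟩

lemma blockSeq_vecLt {u : ℕ → E} (hu : IsBlockSeq b u) :
    ∀ i j, i < j → VecLt b (u i) (u j) := by
  intro i j hij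
  induction j with
  | zero => omega
  | succ j ih =>
    rcases Nat.lt_succ_iff_lt_or_eq.1 hij with h | h
    · intro m hm n hn
      have hsupp : msup b (u j) ∈ supp b (u j) := msup_mem b (hu.1 j)
      exact lt_trans (ih h m hm _ hsupp) (hu.2 j _ hsupp n hn)
    · subst h; exact hu.2 i

lemma le_msup_blockSeq {u : ℕ → E} (hu : IsBlockSeq b u) : ∀ k, k ≤ msup b (u k) := by
  intro k
  induction k with
  | zero => exact Nat.zero_le _
  | succ k ih =>
    have := hu.2 k _ (msup_mem b (hu.1 k)) _ (msup_mem b (hu.1 (k + 1)))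
    omega

lemma blockSeq_natLt {u : ℕ → E} (hu : IsBlockSeq b u) (k : ℕ) :
    NatLt b k (u (k + 1)) := by
  intro n hn
  have := hu.2 k _ (msup_mem b (hu.1 k)) n hn
  have := le_msup_blockSeq b hu k
  omega

lemma blockSubspace_exists_high {X : Submodule 𝔽 E} (hX : IsBlockSubspace b X) (k : ℕ) :
    ∃ y ∈ X, y ≠ 0 ∧ NatLt b k y := by
  rcases hX with ⟨u, hu, rfl⟩
  exact ⟨u (k + 1), Submodule.subset_span ⟨k + 1, rfl⟩, hu.1 _, blockSeq_natLt b hu k⟩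

lemma span_natLt {u : ℕ → E} {M : ℕ} (h : ∀ j, NatLt b M (u j)) {x : E}
    (hx : x ∈ Submodule.span 𝔽 (Set.range u)) : NatLt b M x := by
  have : Submodule.span 𝔽 (Set.range u) ≤ HSub b M := by
    rw [Submodule.span_le]
    rintro _ ⟨j, rfl⟩
    exact h j
  exact this hx

end SRU

end Aux2
section Aux3

open Submodule Function

variable {𝔽 : Type} [Field 𝔽] {E : Type} [AddCommGroup E] [Module 𝔽 E]

namespace SRU

variable (b : Module.Basis ℕ 𝔽 E)

/-- recursively build a block sequence through a sequence of subspaces -/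
noncomputable def buildSeq (S : ℕ → Submodule 𝔽 E)
    (hex : ∀ k m, ∃ y, y ∈ S k ∧ y ≠ 0 ∧ NatLt b m y) : (k : ℕ) → {y : E // y ∈ S k ∧ y ≠ 0}
  | 0 => ⟨(hex 0 0).choose, (hex 0 0).choose_spec.1, (hex 0 0).choose_spec.2.1⟩
  | (k + 1) =>
    ⟨(hex (k + 1) (msup b (buildSeq S hex k).1)).choose,
      (hex (k + 1) (msup b (buildSeq S hex k).1)).choose_spec.1,
      (hex (k + 1) (msup b (buildSeq S hex k).1)).choose_spec.2.1⟩

lemma buildSeq_natLt (S : ℕ → Submodule 𝔽 E)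
    (hex : ∀ k m, ∃ y, y ∈ S k ∧ y ≠ 0 ∧ NatLt b m y) (k : ℕ) :
    NatLt b (msup b (buildSeq b S hex k).1) ((buildSeq b S hex (k + 1)).1) :=
  (hex (k + 1) (msup b (buildSeq b S hex k).1)).choose_spec.2.2

lemma exists_blockSeq_in (S : ℕ → Submodule 𝔽 E)
    (hex : ∀ k m, ∃ y, y ∈ S k ∧ y ≠ 0 ∧ NatLt b m y) :
    ∃ u : ℕ → E, IsBlockSeq b u ∧ ∀ k, u k ∈ S k := by
  refine ⟨fun k => (buildSeq b S hex k).1, ⟨fun k => (buildSeq b S hex k).2.2, ?_⟩,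
    fun k => (buildSeq b S hex k).2.1⟩
  intro k
  exact vecLt_of_natLt_msup b (buildSeq_natLt b S hex k)

lemma exists_blockSubspace_le_of_notFD {Y : Submodule 𝔽 E}
    (hY : ¬FiniteDimensional 𝔽 ↥Y) :
    ∃ X : Submodule 𝔽 E, X ≤ Y ∧ IsBlockSubspace b X := by
  rcases exists_blockSeq_in b (fun _ => Y) (fun _ m => by
      rcases exists_high_of_notFD b hY m with ⟨y, h1, h2, h3⟩; exact ⟨y, h1, h2, h3⟩) with
    ⟨u, hu, hmem⟩
  refine ⟨Submodule.span 𝔽 (Set.range u), ?_, u, hu, rfl⟩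
  rw [Submodule.span_le]
  rintro _ ⟨j, rfl⟩
  exact hmem j

/-- key tail lemma: an element of the span of a block sequence with high support
lies in any submodule containing the tail of the sequence -/
lemma span_tail_mem {u : ℕ → E} (hu : IsBlockSeq b u) {k M : ℕ}
    (hM : ∀ j, j < k → msup b (u j) ≤ M) {x : E}
    (hx : x ∈ Submodule.span 𝔽 (Set.range u)) (hhigh : NatLt b M x)
    {X : Submodule 𝔽 E} (hX : ∀ j, k ≤ j → u j ∈ X) : x ∈ X := by
  rcases Finsupp.mem_span_range_iff_exists_finsupp.1 hx with ⟨c, hc⟩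
  have hsupp : ∀ j ∈ c.support, k ≤ j := by
    intro j0 hj0
    by_contra hlt
    push_neg at hlt
    set m := msup b (u j0) with hm
    have hmem : m ∈ supp b (u j0) := msup_mem b (hu.1 j0)
    -- m is in the support of x
    have hxm : b.repr x m ≠ 0 := by
      have hx' : x = ∑ j ∈ c.support, c j • u j := hc.symm
      have : b.repr x m = ∑ j ∈ c.support, c j * b.repr (u j) m := by
        rw [hx', map_sum]
        rw [Finsupp.finset_sum_apply]
        apply Finset.sum_congr rfl
        intro j _
        rw [map_smul, Finsupp.smul_apply, smul_eq_mul]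
      rw [this]
      rw [Finset.sum_eq_single j0]
      · exact mul_ne_zero (Finsupp.mem_support_iff.1 hj0) (Finsupp.mem_support_iff.1 hmem)
      · intro j hj hne
        have : b.repr (u j) m = 0 := by
          rw [← Finsupp.notMem_support_iff]
          intro hmj
          rcases lt_or_gt_of_ne hne with h | h
          · exact lt_irrefl m (blockSeq_vecLt b hu j j0 h m hmj m hmem)
          · exact lt_irrefl m (blockSeq_vecLt b hu j0 j h m hmem m hmj)
        rw [this, mul_zero]
      · intro h; exact absurd hj0 h
    have : m ∈ supp b x := Finsupp.mem_support_iff.2 hxm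
    have := hhigh m this
    have := hM j0 hlt
    omega
  rw [← hc]
  apply Submodule.sum_mem
  intro j hj
  exact Submodule.smul_mem _ _ (hX j (hsupp j hj))

end SRU

end Aux3
section Aux4

open Submodule Function

variable {𝔽 : Type} [Field 𝔽] {E : Type} [AddCommGroup E] [Module 𝔽 E]

namespace SRU

/-- prepend one element to a sequence -/
def seqCons {α : Type _} (y : α) (g : ℕ → α) : ℕ → α
  | 0 => y
  | n + 1 => g n

lemma hist_length {α : Type _} (x : ℕ → α) (n : ℕ) : (hist x n).length = n := by
  simp [hist]

lemma hist_succ {α : Type _} (x : ℕ → α) (n : ℕ) :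
    hist x (n + 1) = hist x n ++ [x n] := by
  rw [hist, List.ofFn_succ', List.concat_eq_append]
  congr 1

lemma hist_cons {α : Type _} (x : ℕ → α) (n : ℕ) :
    hist x (n + 1) = x 0 :: hist (fun j => x (j + 1)) n := by
  simp [hist, List.ofFn_succ]

lemma hist_map {α β : Type _} (f : α → β) (x : ℕ → α) (n : ℕ) :
    (hist x n).map f = hist (fun i => f (x i)) n := by
  simp [hist, List.map_ofFn]
  rfl

lemma hist_get {α : Type _} (x : ℕ → α) (n : ℕ) (i : ℕ) (h : i < (hist x n).length) :
    (hist x n).get ⟨i, h⟩ = x i := by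
  simp [hist]

lemma hist_take {α : Type _} (x : ℕ → α) {m n : ℕ} (h : m ≤ n) :
    (hist x n).take m = hist x m := by
  apply List.ext_get
  · simp [hist, h]
  · intro i h1 h2
    simp [hist, List.getElem_take]

lemma hist_drop {α : Type _} (x : ℕ → α) (n i : ℕ) :
    (hist x (n + i)).drop n = hist (fun j => x (n + j)) i := by
  apply List.ext_get
  · simp [hist]
  · intro j h1 h2
    simp [hist, List.getElem_drop]

lemma prefCat_append {α : Type _} (l1 l2 : List α) (x : ℕ → α) :
    prefCat (l1 ++ l2) x = prefCat l1 (prefCat l2 x) := by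
  funext n
  simp only [prefCat, List.length_append]
  by_cases h1 : n < l1.length
  · rw [dif_pos (by omega), dif_pos h1]
    simp only [List.get_eq_getElem]
    exact List.getElem_append_left h1
  · rw [dif_neg h1]
    by_cases h2 : n < l1.length + l2.length
    · rw [dif_pos h2, dif_pos (by omega)]
      simp only [List.get_eq_getElem]
      exact List.getElem_append_right (by omega)
    · rw [dif_neg h2, dif_neg (by omega)]
      congr 1
      omega

lemma prefCat_singleton {α : Type _} (y : α) (x : ℕ → α) :
    prefCat [y] x = seqCons y x := by
  funext n
  cases n with
  | zero => rfl
  | succ n => simp [prefCat, seqCons]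

lemma prefCat_hist_shift {α : Type _} (x : ℕ → α) (n : ℕ) :
    prefCat (hist x n) (fun i => x (n + i)) = x := by
  funext m
  simp only [prefCat, hist_length]
  by_cases h : m < n
  · rw [dif_pos h]
    exact hist_get x n m _
  · rw [dif_neg h]
    congr 1
    omega

lemma prefCat_concat {α : Type _} (l : List α) (y : α) (x : ℕ → α) :
    prefCat (l ++ [y]) x = prefCat l (seqCons y x) := by
  rw [prefCat_append, prefCat_singleton]

lemma prefCat_append_hist {α : Type _} (l : List α) (x : ℕ → α) (n : ℕ) :
    prefCat (l ++ hist x n) (fun i => x (n + i)) = prefCat l x := by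
  rw [prefCat_append, prefCat_hist_shift]

variable (b : Module.Basis ℕ 𝔽 E)

lemma IIWinsG_mono {X : Submodule 𝔽 E} {pre : List E} {A B : Set (ℕ → E)}
    (h : IIWinsG b X pre A) (hAB : A ⊆ B) : IIWinsG b X pre B := by
  rcases h with ⟨σ, hσ⟩
  exact ⟨σ, fun Y hY => ⟨(hσ Y hY).1, hAB (hσ Y hY).2⟩⟩

lemma IIWinsG_anti {X X' : Submodule 𝔽 E} {pre : List E} {A : Set (ℕ → E)}
    (h : IIWinsG b X pre A) (hle : X' ≤ X) : IIWinsG b X' pre A := by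
  rcases h with ⟨σ, hσ⟩
  exact ⟨σ, fun Y hY => hσ Y (fun i => ⟨le_trans (hY i).1 hle, (hY i).2⟩)⟩

lemma IWinsF_anti {X X' : Submodule 𝔽 E} {pre : List E} {A : Set (ℕ → E)}
    (h : IWinsF b X pre A) (hle : X' ≤ X) : IWinsF b X' pre A := by
  rcases h with ⟨σ, hσ⟩
  exact ⟨σ, fun x hx => hσ x (fun i =>
    ⟨hle (hx i).1, (hx i).2.1, (hx i).2.2.1, (hx i).2.2.2⟩)⟩

/-- transfer of a II-win down along almost-inclusion -/
lemma IIWinsG_rel {W X : Submodule 𝔽 E} {M : ℕ} {pre : List E} {A : Set (ℕ → E)}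
    (h : IIWinsG b X pre A) (hrel : ∀ x ∈ W, NatLt b M x → x ∈ X) :
    IIWinsG b W pre A := by
  rcases h with ⟨σ, hσ⟩
  set F : List (Submodule 𝔽 E) → E := fun l => σ (l.map (fun Y => Y ⊓ HSub b M))
    with hFdef
  refine ⟨F, fun Y hY => ?_⟩
  set Y' : ℕ → Submodule 𝔽 E := fun i => Y i ⊓ HSub b M with hY'def
  have hmap : ∀ m, F (hist Y m) = σ (hist Y' m) := by
    intro m
    rw [hFdef]
    simp only []
    rw [hist_map]
  have hval : ∀ i, Y' i ≤ X ∧ ¬FiniteDimensional 𝔽 ↥(Y' i) := by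
    intro i
    constructor
    · intro y hy
      exact hrel y ((hY i).1 hy.1) hy.2
    · exact notFD_inf b (hY i).2 M
  have hc := hσ Y' hval
  constructor
  · intro i
    rw [hmap, hmap]
    exact ⟨(inf_le_left : Y' i ≤ Y i) (hc.1 i).1, (hc.1 i).2.1, (hc.1 i).2.2⟩
  · have heq : (fun i => F (hist Y (i + 1))) = fun i => σ (hist Y' (i + 1)) := by
      funext i; rw [hmap]
    rw [heq]
    exact hc.2

/-- transfer of a I-win down along almost-inclusion -/
lemma IWinsF_rel {W X : Submodule 𝔽 E} {M : ℕ} {pre : List E} {A : Set (ℕ → E)}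
    (h : IWinsF b X pre A) (hrel : ∀ x ∈ W, NatLt b M x → x ∈ X) :
    IWinsF b W pre A := by
  rcases h with ⟨σ, hσ⟩
  refine ⟨fun l => σ l + M, fun x hx => ?_⟩
  have hx' : ∀ i, x i ∈ X ∧ x i ≠ 0 ∧ NatLt b (σ (hist x i)) (x i) ∧
      VecLt b (x i) (x (i + 1)) := by
    intro i
    rcases hx i with ⟨h1, h2, h3, h4⟩
    exact ⟨hrel _ h1 (natLt_mono b (Nat.le_add_left M _) h3), h2,
      natLt_mono b (Nat.le_add_right _ M) h3, h4⟩
  have hc := hσ x hx'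
  exact ⟨fun i => Nat.add_lt_add_right (hc.1 i) M, hc.2⟩

end SRU

end Aux4
section Aux5

open Submodule Function

variable {𝔽 : Type} [Field 𝔽] {E : Type} [AddCommGroup E] [Module 𝔽 E]

namespace SRU

variable (b : Module.Basis ℕ 𝔽 E)

/-- The composition lemma: if below `X` every infinite-dimensional subspace contains,
above any bound, a vector `y` such that II wins `G_{W'}(q ++ [y])`, then II wins
`G_X(q)`. -/
lemma lemC {X W' : Submodule 𝔽 E} (hXW' : X ≤ W') (q : List E) (𝒜 : Set (ℕ → E))
    (h : ∀ Y, Y ≤ X → ¬FiniteDimensional 𝔽 ↥Y →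
      ∀ k, ∃ y, y ∈ Y ∧ y ≠ 0 ∧ NatLt b k y ∧ IIWinsG b W' (q ++ [y]) 𝒜) :
    IIWinsG b X q 𝒜 := by
  classical
  set yw : Submodule 𝔽 E → E := fun Y =>
    if hY : Y ≤ X ∧ ¬FiniteDimensional 𝔽 ↥Y then (h Y hY.1 hY.2 0).choose else 0
    with hywdef
  set sw : Submodule 𝔽 E → (List (Submodule 𝔽 E) → E) := fun Y =>
    if hY : IIWinsG b W' (q ++ [yw Y]) 𝒜 then hY.choose else fun _ => 0 with hswdef
  set σ : List (Submodule 𝔽 E) → E := fun l =>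
    match l with
    | [] => 0
    | [Y0] => yw Y0
    | Y0 :: rest => sw Y0 (rest.map (fun Z => Z ⊓ HSub b (msup b (yw Y0))))
    with hσdef
  refine ⟨σ, fun Y hY => ?_⟩
  have hY0 : Y 0 ≤ X ∧ ¬FiniteDimensional 𝔽 ↥(Y 0) := hY 0
  have hyw0 : yw (Y 0) = (h (Y 0) hY0.1 hY0.2 0).choose := by
    rw [hywdef]; exact dif_pos hY0
  have hy0spec := (h (Y 0) hY0.1 hY0.2 0).choose_spec
  have hy0mem : yw (Y 0) ∈ Y 0 := by rw [hyw0]; exact hy0spec.1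
  have hy0ne : yw (Y 0) ≠ 0 := by rw [hyw0]; exact hy0spec.2.1
  have hwin : IIWinsG b W' (q ++ [yw (Y 0)]) 𝒜 := by rw [hyw0]; exact hy0spec.2.2.2
  have hsw0 : sw (Y 0) = hwin.choose := by rw [hswdef]; exact dif_pos hwin
  set σin := hwin.choose with hσindef
  have hσinspec := hwin.choose_spec
  set m : ℕ := msup b (yw (Y 0)) with hmdef
  set Y' : ℕ → Submodule 𝔽 E := fun j => Y (j + 1) ⊓ HSub b m with hY'def
  have hval' : ∀ i, Y' i ≤ W' ∧ ¬FiniteDimensional 𝔽 ↥(Y' i) := by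
    intro i
    exact ⟨le_trans (le_trans inf_le_left (hY (i + 1)).1) hXW',
      notFD_inf b (hY (i + 1)).2 m⟩
  have hcin := hσinspec Y' hval'
  -- evaluation of the composed strategy
  have heval1 : σ (hist Y 1) = yw (Y 0) := by
    have : hist Y 1 = [Y 0] := by
      rw [hist_cons]; rfl
    rw [this]
  have heval2 : ∀ i, σ (hist Y (i + 2)) = σin (hist Y' (i + 1)) := by
    intro i
    have h1 : hist Y (i + 2) = Y 0 :: hist (fun j => Y (j + 1)) (i + 1) := hist_cons Y (i + 1)
    rw [h1]
    have h2 : hist (fun j => Y (j + 1)) (i + 1) ≠ [] := by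
      intro hc
      have := congrArg List.length hc
      rw [hist_length] at this
      simp at this
    -- the match takes the third branch
    have h3 : σ (Y 0 :: hist (fun j => Y (j + 1)) (i + 1)) =
        sw (Y 0) ((hist (fun j => Y (j + 1)) (i + 1)).map
          (fun Z => Z ⊓ HSub b (msup b (yw (Y 0))))) := by
      rw [hσdef]
      rcases hl : hist (fun j => Y (j + 1)) (i + 1) with _ | ⟨a, rest⟩
      · exact absurd hl h2
      · rfl
    rw [h3, hsw0, hist_map]
  have hin_mem : ∀ i, σin (hist Y' (i + 1)) ∈ Y' i := fun i => (hcin.1 i).1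
  constructor
  · intro i
    cases i with
    | zero =>
      refine ⟨by rw [heval1]; exact hy0mem, by rw [heval1]; exact hy0ne, ?_⟩
      rw [heval1, heval2 0]
      apply vecLt_of_natLt_msup
      have := hin_mem 0
      exact ((inf_le_right : Y' 0 ≤ HSub b m) this : NatLt b m _)
    | succ i =>
      have e1 := heval2 i
      have e2 := heval2 (i + 1)
      refine ⟨?_, ?_, ?_⟩
      · rw [show i + 1 + 1 = i + 2 from rfl, e1]
        exact (inf_le_left : Y' i ≤ Y (i + 1)) (hin_mem i)
      · rw [show i + 1 + 1 = i + 2 from rfl, e1]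
        exact (hcin.1 i).2.1
      · rw [show i + 1 + 1 = i + 2 from rfl, show i + 1 + 2 = i + 1 + 2 from rfl, e1, e2]
        exact (hcin.1 i).2.2
  · have : (fun i => σ (hist Y (i + 1))) = seqCons (yw (Y 0)) (fun i => σin (hist Y' (i + 1))) := by
      funext i
      cases i with
      | zero => rw [heval1]; rfl
      | succ i => rw [show i + 1 + 1 = i + 2 from rfl, heval2 i]; rfl
    rw [this, ← prefCat_concat]
    exact hcin.2

/-- chain of subspaces for the fusion argument -/
noncomputable def chainSeq {V : Submodule 𝔽 E} (hV : IsBlockSubspace b V)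
    (P : ℕ → Submodule 𝔽 E → Prop)
    (hstep : ∀ k X, X ≤ V → IsBlockSubspace b X → ∃ X', X' ≤ X ∧ IsBlockSubspace b X' ∧ P k X') :
    (k : ℕ) → {X : Submodule 𝔽 E // X ≤ V ∧ IsBlockSubspace b X ∧ P k X}
  | 0 =>
    ⟨(hstep 0 V le_rfl hV).choose,
      le_trans (hstep 0 V le_rfl hV).choose_spec.1 le_rfl,
      (hstep 0 V le_rfl hV).choose_spec.2.1, (hstep 0 V le_rfl hV).choose_spec.2.2⟩
  | (k + 1) =>
    ⟨(hstep (k + 1) (chainSeq hV P hstep k).1 (chainSeq hV P hstep k).2.1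
        (chainSeq hV P hstep k).2.2.1).choose,
      le_trans (hstep (k + 1) (chainSeq hV P hstep k).1 (chainSeq hV P hstep k).2.1
        (chainSeq hV P hstep k).2.2.1).choose_spec.1 (chainSeq hV P hstep k).2.1,
      (hstep (k + 1) (chainSeq hV P hstep k).1 (chainSeq hV P hstep k).2.1
        (chainSeq hV P hstep k).2.2.1).choose_spec.2.1,
      (hstep (k + 1) (chainSeq hV P hstep k).1 (chainSeq hV P hstep k).2.1
        (chainSeq hV P hstep k).2.2.1).choose_spec.2.2⟩

lemma chainSeq_succ_le {V : Submodule 𝔽 E} (hV : IsBlockSubspace b V)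
    (P : ℕ → Submodule 𝔽 E → Prop)
    (hstep : ∀ k X, X ≤ V → IsBlockSubspace b X → ∃ X', X' ≤ X ∧ IsBlockSubspace b X' ∧ P k X')
    (k : ℕ) : (chainSeq b hV P hstep (k + 1)).1 ≤ (chainSeq b hV P hstep k).1 :=
  (hstep (k + 1) (chainSeq b hV P hstep k).1 (chainSeq b hV P hstep k).2.1
    (chainSeq b hV P hstep k).2.2.1).choose_spec.1

lemma chainSeq_anti {V : Submodule 𝔽 E} (hV : IsBlockSubspace b V)
    (P : ℕ → Submodule 𝔽 E → Prop)
    (hstep : ∀ k X, X ≤ V → IsBlockSubspace b X → ∃ X', X' ≤ X ∧ IsBlockSubspace b X' ∧ P k X')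
    {j k : ℕ} (h : j ≤ k) : (chainSeq b hV P hstep k).1 ≤ (chainSeq b hV P hstep j).1 := by
  induction k with
  | zero => rw [Nat.le_zero.1 h]
  | succ k ih =>
    by_cases hjk : j ≤ k
    · exact le_trans (chainSeq_succ_le b hV P hstep k) (ih hjk)
    · have : j = k + 1 := by omega
      rw [this]

/-- the generic fusion lemma -/
lemma fusion {V : Submodule 𝔽 E} (hV : IsBlockSubspace b V) (P : ℕ → Submodule 𝔽 E → Prop)
    (hstep : ∀ k X, X ≤ V → IsBlockSubspace b X →
      ∃ X', X' ≤ X ∧ IsBlockSubspace b X' ∧ P k X') :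
    ∃ W, W ≤ V ∧ IsBlockSubspace b W ∧
      ∀ k, ∃ X M, P k X ∧ X ≤ V ∧ ∀ x ∈ W, NatLt b M x → x ∈ X := by
  set C : ℕ → Submodule 𝔽 E := fun k => (chainSeq b hV P hstep k).1 with hCdef
  have hCblock : ∀ k, IsBlockSubspace b (C k) := fun k => (chainSeq b hV P hstep k).2.2.1
  have hCV : ∀ k, C k ≤ V := fun k => (chainSeq b hV P hstep k).2.1
  have hCP : ∀ k, P k (C k) := fun k => (chainSeq b hV P hstep k).2.2.2
  have hCanti : ∀ {j k}, j ≤ k → C k ≤ C j := fun h => chainSeq_anti b hV P hstep h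
  rcases exists_blockSeq_in b C (fun k m => by
      rcases blockSubspace_exists_high b (hCblock k) m with ⟨y, h1, h2, h3⟩
      exact ⟨y, h1, h2, h3⟩) with ⟨u, hu, humem⟩
  refine ⟨Submodule.span 𝔽 (Set.range u), ?_, ⟨u, hu, rfl⟩, ?_⟩
  · rw [Submodule.span_le]
    rintro _ ⟨j, rfl⟩
    exact hCV j (humem j)
  · intro k
    refine ⟨C k, (Finset.range k).sup (fun j => msup b (u j)), hCP k, hCV k, ?_⟩
    intro x hx hhigh
    refine span_tail_mem b hu (k := k) ?_ hx hhigh ?_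
    · intro j hj
      exact Finset.le_sup (f := fun j => msup b (u j)) (Finset.mem_range.2 hj)
    · intro j hj
      exact hCanti hj (humem j)

end SRU

end Aux5
section Main

open Submodule Function

theorem strategicallyRamsey_iUnion
    {𝔽 : Type} [Field 𝔽] [Countable 𝔽]
    {E : Type} [AddCommGroup E] [Module 𝔽 E]
    (b : Module.Basis ℕ 𝔽 E) (A : ℕ → Set (ℕ → E))
    (hA : ∀ n, StrategicallyRamsey b (A n)) :
    StrategicallyRamsey b (⋃ n, A n) := by
  classical
  intro V hV z hz
  set AU : Set (ℕ → E) := ⋃ n, A n with hAUdef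
  -- countability of positions
  have hcE : Countable E := Countable.of_equiv (ℕ →₀ 𝔽) b.repr.toEquiv.symm
  obtain ⟨e, he⟩ := exists_surjective_nat (List E)
  -- ## Fusion A : the basic dichotomies at a fixed space W1
  obtain ⟨W1, hW1V, hW1block, hrecA⟩ :=
    SRU.fusion b hV
      (fun k X => IsFinBlockSeq b (z ++ e k) →
        (IIWinsG b X (z ++ e k) (A (e k).length) ∨
          IWinsF b X (z ++ e k) ((A (e k).length)ᶜ)))
      (by
        intro k X hXV hXb
        by_cases hfb : IsFinBlockSeq b (z ++ e k)
        · rcases hA (e k).length X hXb (z ++ e k) hfb with ⟨W', h1, h2, h3⟩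
          exact ⟨W', h1, h2, fun _ => h3⟩
        · exact ⟨X, le_rfl, hXb, fun hfb' => absurd hfb' hfb⟩)
  have hstar : ∀ p : List E, IsFinBlockSeq b (z ++ p) →
      (IIWinsG b W1 (z ++ p) (A p.length) ∨ IWinsF b W1 (z ++ p) ((A p.length)ᶜ)) := by
    intro p hfb
    obtain ⟨k, rfl⟩ := he p
    rcases hrecA k with ⟨X, M, hP, _, hrel⟩
    rcases hP hfb with h | h
    · exact Or.inl (SRU.IIWinsG_rel b h hrel)
    · exact Or.inr (SRU.IWinsF_rel b h hrel)
  -- ## Fusion B : decide accept/reject for every position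
  set rej : List E → Submodule 𝔽 E → Prop := fun p X =>
    ∀ Y, Y ≤ X → IsBlockSubspace b Y → ¬ IIWinsG b Y (z ++ p) AU with hrejdef
  obtain ⟨W2, hW2W1, hW2block, hrecB⟩ :=
    SRU.fusion b hW1block
      (fun k X => IIWinsG b X (z ++ e k) AU ∨ rej (e k) X)
      (by
        intro k X hXW1 hXb
        by_cases hex : ∃ X', X' ≤ X ∧ IsBlockSubspace b X' ∧ IIWinsG b X' (z ++ e k) AU
        · rcases hex with ⟨X', h1, h2, h3⟩
          exact ⟨X', h1, h2, Or.inl h3⟩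
        · refine ⟨X, le_rfl, hXb, Or.inr ?_⟩
          intro Y hYX hYb hacc
          exact hex ⟨Y, hYX, hYb, hacc⟩)
  have hdec : ∀ p : List E, IIWinsG b W2 (z ++ p) AU ∨ rej p W2 := by
    intro p
    obtain ⟨k, rfl⟩ := he p
    rcases hrecB k with ⟨X, M, hP, _, hrel⟩
    rcases hP with h | h
    · exact Or.inl (SRU.IIWinsG_rel b h hrel)
    · -- transfer of rejection
      refine Or.inr ?_
      intro Y hYW2 hYb hacc
      rcases hYb with ⟨v, hv, rfl⟩
      -- pass to a tail of the block sequence generating Y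
      set v' : ℕ → E := fun j => v (j + (M + 1)) with hv'def
      have hv'block : IsBlockSeq b v' := by
        constructor
        · intro j; exact hv.1 _
        · intro j
          have := hv.2 (j + (M + 1))
          simpa [hv'def, Nat.add_right_comm] using this
      have hv'high : ∀ j, NatLt b M (v' j) := by
        intro j
        have h1 : NatLt b (j + M) (v (j + M + 1)) := SRU.blockSeq_natLt b hv (j + M)
        have h2 : NatLt b M (v (j + M + 1)) :=
          SRU.natLt_mono b (Nat.le_add_left M j) h1
        simpa [hv'def, Nat.add_assoc] using h2
      set Y'' : Submodule 𝔽 E := Submodule.span 𝔽 (Set.range v') with hY''def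
      have hY''Y : Y'' ≤ Submodule.span 𝔽 (Set.range v) := by
        rw [hY''def, Submodule.span_le]
        rintro _ ⟨j, rfl⟩
        exact Submodule.subset_span ⟨j + (M + 1), rfl⟩
      have hY''X : Y'' ≤ X := by
        intro x hx
        exact hrel x (hYW2 (hY''Y hx)) (SRU.span_natLt b hv'high hx)
      exact h Y'' hY''X ⟨v', hv'block, rfl⟩ (SRU.IIWinsG_anti b hacc hY''Y)
  -- ## Fusion C : amplify rejection to all high one-step extensions
  obtain ⟨W3, hW3W2, hW3block, hrecC⟩ :=
    SRU.fusion b hW2block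
      (fun k X => rej (e k) W2 →
        ∃ k0, ∀ y ∈ X, y ≠ 0 → NatLt b k0 y →
          ¬ IIWinsG b W2 (z ++ ((e k) ++ [y])) AU)
      (by
        intro k X hXW2 hXb
        by_cases hrej : rej (e k) W2
        · by_cases hex : ∃ Y, Y ≤ X ∧ ¬FiniteDimensional 𝔽 ↥Y ∧
              ∃ k0, ∀ y ∈ Y, y ≠ 0 → NatLt b k0 y →
                ¬ IIWinsG b W2 (z ++ ((e k) ++ [y])) AU
          · rcases hex with ⟨Y, hYX, hYFD, k0, hall⟩
            rcases SRU.exists_blockSubspace_le_of_notFD b hYFD with ⟨X', hX'Y, hX'b⟩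
            exact ⟨X', le_trans hX'Y hYX, hX'b,
              fun _ => ⟨k0, fun y hy h0 hk0 => hall y (hX'Y hy) h0 hk0⟩⟩
          · exfalso
            push_neg at hex
            have hfreq : ∀ Y, Y ≤ X → ¬FiniteDimensional 𝔽 ↥Y →
                ∀ k0, ∃ y, y ∈ Y ∧ y ≠ 0 ∧ NatLt b k0 y ∧
                  IIWinsG b W2 ((z ++ e k) ++ [y]) AU := by
              intro Y hYX hYFD k0
              rcases hex Y hYX hYFD k0 with ⟨y, hy1, hy2, hy3, hy4⟩
              refine ⟨y, hy1, hy2, hy3, ?_⟩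
              rwa [List.append_assoc]
            have hacc : IIWinsG b X (z ++ e k) AU :=
              SRU.lemC b hXW2 (z ++ e k) AU hfreq
            exact hrej X hXW2 hXb hacc
        · exact ⟨X, le_rfl, hXb, fun h => absurd h hrej⟩)
  have hKex : ∀ p : List E, rej p W2 →
      ∃ K, ∀ y ∈ W3, y ≠ 0 → NatLt b K y →
        ¬ IIWinsG b W2 (z ++ (p ++ [y])) AU := by
    intro p hrej
    obtain ⟨k, rfl⟩ := he p
    rcases hrecC k with ⟨X, M, hP, _, hrel⟩
    rcases hP hrej with ⟨k0, hall⟩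
    refine ⟨max k0 M, fun y hy h0 hK => ?_⟩
    exact hall y (hrel y hy (SRU.natLt_mono b (le_max_right k0 M) hK)) h0
      (SRU.natLt_mono b (le_max_left k0 M) hK)
  -- output
  have hW3W1 : W3 ≤ W1 := le_trans hW3W2 hW2W1
  refine ⟨W3, le_trans hW3W1 hW1V, hW3block, ?_⟩
  rcases hdec [] with hacc | hrej0
  · -- II wins
    left
    rw [List.append_nil] at hacc
    exact SRU.IIWinsG_anti b hacc hW3W2
  · -- I wins the asymptotic game
    right
    -- the auxiliary strategies
    set τf : List E → (List E → ℕ) := fun p =>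
      if h : IWinsF b W1 (z ++ p) ((A p.length)ᶜ) then h.choose else fun _ => 0
      with hτfdef
    set Kf : List E → ℕ := fun p =>
      if h : ∃ K, ∀ y ∈ W3, y ≠ 0 → NatLt b K y →
          ¬ IIWinsG b W2 (z ++ (p ++ [y])) AU then h.choose else 0
      with hKfdef
    set raw : List E → ℕ := fun l =>
      SRU.msupL b (z ++ l) + Kf l +
        ((Finset.range (l.length + 1)).sup (fun m => τf (l.take m) (l.drop m)))
      with hrawdef
    set σs : List E → ℕ := fun l =>
      ((Finset.range (l.length + 1)).sup (fun j => raw (l.take j))) + l.length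
      with hσsdef
    have hraw_le : ∀ l : List E, raw l ≤ σs l := by
      intro l
      rw [hσsdef]
      simp only []
      have : raw (l.take l.length) ≤
          (Finset.range (l.length + 1)).sup (fun j => raw (l.take j)) :=
        Finset.le_sup (f := fun j => raw (l.take j))
          (Finset.mem_range.2 (Nat.lt_succ_self _))
      rw [List.take_length] at this
      omega
    have hmsupL_le : ∀ l : List E, SRU.msupL b (z ++ l) ≤ σs l := by
      intro l
      have := hraw_le l
      rw [hrawdef] at this
      simp only [] at this
      omega
    have hKf_le : ∀ l : List E, Kf l ≤ σs l := by
      intro l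
      have := hraw_le l
      rw [hrawdef] at this
      simp only [] at this
      omega
    have hτf_le : ∀ (l : List E) (m : ℕ), m ≤ l.length →
        τf (l.take m) (l.drop m) ≤ σs l := by
      intro l m hm
      have h1 : τf (l.take m) (l.drop m) ≤
          (Finset.range (l.length + 1)).sup (fun m => τf (l.take m) (l.drop m)) :=
        Finset.le_sup (f := fun m => τf (l.take m) (l.drop m))
          (Finset.mem_range.2 (Nat.lt_succ_of_le hm))
      have h2 := hraw_le l
      rw [hrawdef] at h2
      simp only [] at h2
      omega
    refine ⟨σs, fun x hx => ?_⟩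
    -- strict monotonicity of the integers played
    have heqσ : ∀ m, σs (hist x m) =
        ((Finset.range (m + 1)).sup (fun j => raw ((hist x m).take j))) + m := by
      intro m
      rw [hσsdef]
      simp only [SRU.hist_length]
    have hmono : ∀ i, σs (hist x i) < σs (hist x (i + 1)) := by
      intro i
      rw [heqσ i, heqσ (i + 1)]
      have hsup : (Finset.range (i + 1)).sup (fun j => raw ((hist x i).take j)) ≤
          (Finset.range (i + 1 + 1)).sup (fun j => raw ((hist x (i + 1)).take j)) := by
        apply Finset.sup_le
        intro j hj
        have hji : j ≤ i := Nat.lt_succ_iff.1 (Finset.mem_range.1 hj)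
        have e1 : (hist x i).take j = hist x j := SRU.hist_take x hji
        have e2 : (hist x (i + 1)).take j = hist x j := SRU.hist_take x (by omega)
        rw [e1, ← e2]
        exact Finset.le_sup (f := fun j => raw ((hist x (i + 1)).take j))
          (Finset.mem_range.2 (by omega))
      omega
    -- the invariant: every reached position is rejected and a block position
    have hInv : ∀ i, rej (hist x i) W2 ∧ IsFinBlockSeq b (z ++ hist x i) := by
      intro i
      induction i with
      | zero =>
        have h0 : hist x 0 = ([] : List E) := rfl
        rw [h0, List.append_nil]
        exact ⟨hrej0, hz⟩
      | succ i ih =>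
        rcases ih with ⟨hr, hfb⟩
        rcases hx i with ⟨hmem, hne, hnat, _⟩
        have hsucc : hist x (i + 1) = hist x i ++ [x i] := SRU.hist_succ x i
        have hKp := hKex (hist x i) hr
        have hKfeq : ∀ y ∈ W3, y ≠ 0 → NatLt b (Kf (hist x i)) y →
            ¬ IIWinsG b W2 (z ++ (hist x i ++ [y])) AU := by
          have : Kf (hist x i) = hKp.choose := by
            rw [hKfdef]; exact dif_pos hKp
          rw [this]
          exact hKp.choose_spec
        have hnotacc : ¬ IIWinsG b W2 (z ++ (hist x i ++ [x i])) AU :=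
          hKfeq (x i) hmem hne
            (SRU.natLt_mono b (hKf_le (hist x i)) hnat)
        constructor
        · rw [hsucc]
          rcases hdec (hist x i ++ [x i]) with h | h
          · exact absurd h hnotacc
          · exact h
        · rw [hsucc, ← List.append_assoc]
          refine SRU.finBlockSeq_append b hfb hne ?_
          exact SRU.natLt_mono b (hmsupL_le (hist x i)) hnat
    refine ⟨hmono, ?_⟩
    -- the outcome avoids every A n
    rw [Set.mem_compl_iff, hAUdef, Set.mem_iUnion]
    push_neg
    intro n
    rcases hInv n with ⟨hr, hfb⟩
    -- the position is not won by II for A n below W1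
    have hFwin : IWinsF b W1 (z ++ hist x n) ((A (hist x n).length)ᶜ) := by
      rcases hstar (hist x n) hfb with h | h
      · exfalso
        have h1 : IIWinsG b W1 (z ++ hist x n) AU :=
          SRU.IIWinsG_mono b h (Set.subset_iUnion A (hist x n).length)
        have h2 : IIWinsG b W2 (z ++ hist x n) AU := SRU.IIWinsG_anti b h1 hW2W1
        exact hr W2 le_rfl hW2block h2
      · exact h
    have hτeq : τf (hist x n) = hFwin.choose := by
      rw [hτfdef]; exact dif_pos hFwin
    have hτspec := hFwin.choose_spec
    -- the shifted sequence obeys the strategy for A n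
    set x' : ℕ → E := fun i => x (n + i) with hx'def
    have hobeys : ∀ i, x' i ∈ W1 ∧ x' i ≠ 0 ∧
        NatLt b (hFwin.choose (hist x' i)) (x' i) ∧ VecLt b (x' i) (x' (i + 1)) := by
      intro i
      rcases hx (n + i) with ⟨hmem, hne, hnat, hvec⟩
      refine ⟨hW3W1 hmem, hne, ?_, ?_⟩
      · have h1 : (hist x (n + i)).take n = hist x n := SRU.hist_take x (Nat.le_add_right n i)
        have h2 : (hist x (n + i)).drop n = hist x' i := SRU.hist_drop x n i
        have h3 : τf ((hist x (n + i)).take n) ((hist x (n + i)).drop n) ≤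
            σs (hist x (n + i)) := by
          apply hτf_le
          rw [SRU.hist_length]
          exact Nat.le_add_right n i
        rw [h1, h2, hτeq] at h3
        exact SRU.natLt_mono b h3 hnat
      · have : n + i + 1 = n + (i + 1) := by omega
        rw [hx'def]
        simp only []
        rw [← this]
        exact hvec
    have hconc := hτspec x' hobeys
    have hfinal := hconc.2
    rw [SRU.prefCat_append_hist z x n] at hfinal
    rw [Set.mem_compl_iff] at hfinal
    rw [SRU.hist_length] at hfinal
    exact hfinal

end Main
end
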